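/- The rule (N) of the F₁ fragment is sound: if a frame W satisfies X ⇏ Y, X ⇒ W', and Z ⇒ Y (for propositional variables X, Y, Z, W'), then W satisfies W' ⇏ Z. -/

import Mathlib

/-- Propositional formulas over variables `V`. -/
inductive PropForm (V : Type) : Type
  | var : V → PropForm V
  | not : PropForm V → PropForm V
  | and : PropForm V → PropForm V → PropForm V
  | or  : PropForm V → PropForm V → PropForm V
  | imp : PropForm V → PropForm V → PropForm V

namespace PropForm
def eval {V : Type} (v : V → Bool) : PropForm V → Bool
  | var x => v x
  | not A => !(A.eval v)
  | and A B => A.eval v && B.eval v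
  | or A B => A.eval v || B.eval v
  | imp A B => !(A.eval v) || B.eval v
end PropForm

/-- s-formulas: positive `A ⇒ B` or negative `A ⇏ B`. -/
inductive SForm (V : Type) : Type
  | pos : PropForm V → PropForm V → SForm V
  | neg : PropForm V → PropForm V → SForm V

def SForm.IsPos {V : Type} : SForm V → Prop
  | .pos _ _ => True
  | .neg _ _ => False

/-- A frame (set of valuations, nonemptiness required separately) satisfies an s-formula. -/
def FrameSat {V : Type} (W : Set (V → Bool)) : SForm V → Prop
  | .pos A B => ∀ v ∈ W, A.eval v = true → B.eval v = true
  | .neg A B => ∃ v ∈ W, A.eval v = true ∧ B.eval v = false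

/-- Satisfiability of a set of s-formulas by some (nonempty) frame. -/
def SSat {V : Type} (Γ : Set (SForm V)) : Prop :=
  ∃ W : Set (V → Bool), W.Nonempty ∧ ∀ φ ∈ Γ, FrameSat W φ

/-- s-logical consequence `Γ ⊨ₛ α`. -/
def SCons {V : Type} (Γ : Set (SForm V)) (α : SForm V) : Prop :=
  ∀ W : Set (V → Bool), W.Nonempty → (∀ φ ∈ Γ, FrameSat W φ) → FrameSat W α

/-- `Γ⁺`: the positive s-formulas of `Γ`. -/
def posPart {V : Type} (Γ : Set (SForm V)) : Set (SForm V) :=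
  {φ | φ ∈ Γ ∧ ∃ A B, φ = SForm.pos A B}

/-- `Γ⁺_prop`: propositional implications corresponding to the positive s-formulas of `Γ`. -/
def propPart {V : Type} (Γ : Set (SForm V)) : Set (PropForm V) :=
  {C | ∃ A B, SForm.pos A B ∈ Γ ∧ C = PropForm.imp A B}

/-- Classical propositional satisfiability of a set of formulas. -/
def PropSat {V : Type} (S : Set (PropForm V)) : Prop :=
  ∃ v : V → Bool, ∀ C ∈ S, C.eval v = true

/-- Classical propositional consequence. -/
def PropCons {V : Type} (S : Set (PropForm V)) (C : PropForm V) : Prop :=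
  ∀ v : V → Bool, (∀ D ∈ S, D.eval v = true) → C.eval v = true

/-- Conjunction of a nonempty list of variables. -/
def varConj {V : Type} (x : V) (l : List V) : PropForm V :=
  l.foldl (fun acc y => acc.and (.var y)) (.var x)

/-- Disjunction of a nonempty list of variables. -/
def varDisj {V : Type} (x : V) (l : List V) : PropForm V :=
  l.foldl (fun acc y => acc.or (.var y)) (.var x)

theorem stmt11 {V : Type} (W : Set (V → Bool)) (hW : W.Nonempty) (X Y Z W' : V)
    (h1 : FrameSat W (SForm.neg (.var X) (.var Y)))
    (h2 : FrameSat W (SForm.pos (.var X) (.var W')))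
    (h3 : FrameSat W (SForm.pos (.var Z) (.var Y))) :
    FrameSat W (SForm.neg (.var W') (.var Z)) := by
  obtain ⟨v, hv, hX, hY⟩ := h1
  refine ⟨v, hv, h2 v hv hX, ?_⟩
  by_contra h
  simp only [PropForm.eval] at *
  have := h3 v hv (by simpa [PropForm.eval] using h)
  simp [PropForm.eval, hY] at this
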